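/- Let F be a field, V a nonsingular k×k matrix over F, P a nonsingular k×k matrix over F with entries p_{ij}, U = V·P with columns u_1,…,u_k, V̂ = (Vᵗ)⁻¹ with columns v̂_1,…,v̂_k, and Û = (Uᵗ)⁻¹ with columns û_1,…,û_k. Let X be any k×k matrix over F with columns x_1,…,x_k, let δ, ε ∈ F with δ ≠ 0, set Y = δ V̂ Xᵗ U + ε X P with columns y_1,…,y_k, and let z_i = ∑_{ℓ=1}^k p_{ℓi} x_ℓ. Then for every r with 1 ≤ r ≤ k and every i ∈ {1,…,r}: y_i = δ ∑_{ℓ=1}^k (u_iᵗ x_ℓ) v̂_ℓ + ε (∑_{ℓ=1}^k p_{ℓi} (u_iᵗ x_ℓ)) û_i + ε ∑_{j ∈ {1,…,r}∖{i}} (u_jᵗ z_i) û_j + (ε/δ) ∑_{j=r+1}^{k} ( (u_iᵗ y_j) − ε ∑_{ℓ=1}^k p_{ℓj} (u_iᵗ x_ℓ) ) û_j. -/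
import Mathlib


open Matrix Finset

/-- Correctness of cooperative repair of the parity-check nodes
`k+1,…,k+r`: the lost parity vector `y_i` (for `i ≤ r`) is exactly
`δ ∑_ℓ (u_iᵗx_ℓ) v̂_ℓ + ε (∑_ℓ p_{ℓi}(u_iᵗx_ℓ)) û_i + ε ∑_{j∈{1,…,r}∖{i}} (u_jᵗz_i) û_j
 + (ε/δ) ∑_{j=r+1}^k ((u_iᵗy_j) − ε ∑_ℓ p_{ℓj}(u_iᵗx_ℓ)) û_j`. -/
theorem parity_repair_identity
    {F : Type*} [Field F] {k : ℕ}
    (V P : Matrix (Fin k) (Fin k) F)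
    (hV : IsUnit V.det) (hP : IsUnit P.det)
    (X : Matrix (Fin k) (Fin k) F) (δ ε : F) (hδ : δ ≠ 0)
    (Y : Matrix (Fin k) (Fin k) F)
    (hY : Y = δ • ((Vᵀ)⁻¹ * Xᵀ * (V * P)) + ε • (X * P))
    (z : Fin k → Fin k → F)
    (hz : ∀ i idx, z i idx = ∑ ℓ, P ℓ i * X idx ℓ)
    (r : ℕ) (hr1 : 1 ≤ r) (hrk : r ≤ k) :
    ∀ i : Fin k, (i : ℕ) < r →
      (fun idx => Y idx i) =
      (fun idx =>
        δ * (∑ ℓ, ((fun t => (V * P) t i) ⬝ᵥ (fun t => X t ℓ)) * (Vᵀ)⁻¹ idx ℓ) +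
        ε * (∑ ℓ, P ℓ i * ((fun t => (V * P) t i) ⬝ᵥ (fun t => X t ℓ))) *
          ((V * P)ᵀ)⁻¹ idx i +
        ε * (∑ j ∈ univ.filter (fun j : Fin k => (j : ℕ) < r ∧ j ≠ i),
          ((fun t => (V * P) t j) ⬝ᵥ z i) * ((V * P)ᵀ)⁻¹ idx j) +
        (ε / δ) * (∑ j ∈ univ.filter (fun j : Fin k => r ≤ (j : ℕ)),
          (((fun t => (V * P) t i) ⬝ᵥ (fun t => Y t j)) -
            ε * ∑ ℓ, P ℓ j * ((fun t => (V * P) t i) ⬝ᵥ (fun t => X t ℓ))) *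
          ((V * P)ᵀ)⁻¹ idx j)) := by
  intro i hi
  have hVT : IsUnit Vᵀ.det := by rwa [Matrix.det_transpose]
  have hUT : IsUnit ((V * P)ᵀ).det := by
    rw [Matrix.det_transpose, Matrix.det_mul]; exact hV.mul hP
  set M : Matrix (Fin k) (Fin k) F := (V * P)ᵀ * X * P with hM
  have h1 : ∀ (j ℓ : Fin k),
      ((fun t => (V * P) t j) ⬝ᵥ (fun t => X t ℓ)) = ((V * P)ᵀ * X) j ℓ := by
    intro j ℓ
    simp [dotProduct, Matrix.mul_apply, mul_comm]
  have hzi : z i = fun t => (X * P) t i := by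
    funext t
    rw [hz, Matrix.mul_apply]
    exact Finset.sum_congr rfl fun ℓ _ => mul_comm _ _
  have h2 : ∀ j : Fin k, ((fun t => (V * P) t j) ⬝ᵥ z i) = M j i := by
    intro j
    rw [hzi, hM, Matrix.mul_assoc, Matrix.mul_apply]
    simp [dotProduct, Matrix.transpose_apply]
  have cancel : ∀ B : Matrix (Fin k) (Fin k) F, Vᵀ * ((Vᵀ)⁻¹ * B) = B :=
    fun B => Matrix.mul_nonsing_inv_cancel_left _ _ hVT
  have hUY : (V * P)ᵀ * Y = δ • Mᵀ + ε • M := by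
    rw [hY, Matrix.mul_add, Matrix.mul_smul, Matrix.mul_smul, hM]
    congr 1
    · congr 1
      simp only [Matrix.transpose_mul, Matrix.transpose_transpose, Matrix.mul_assoc, cancel]
    · congr 1
      rw [Matrix.mul_assoc]
  have h3 : ∀ j : Fin k,
      ((fun t => (V * P) t i) ⬝ᵥ (fun t => Y t j)) = δ * M j i + ε * M i j := by
    intro j
    have h := congrArg (fun A : Matrix (Fin k) (Fin k) F => A i j) hUY
    simpa [Matrix.mul_apply, dotProduct, Matrix.transpose_apply, Matrix.add_apply,
      Matrix.smul_apply, smul_eq_mul, mul_comm] using h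
  have h4 : ∀ j : Fin k, (∑ ℓ, P ℓ j * ((V * P)ᵀ * X) i ℓ) = M i j := by
    intro j
    rw [hM, Matrix.mul_apply]
    exact Finset.sum_congr rfl fun ℓ _ => mul_comm _ _
  have hinv : ((V * P)ᵀ)⁻¹ * M = X * P := by
    rw [hM, Matrix.mul_assoc]
    exact Matrix.nonsing_inv_mul_cancel_left _ _ hUT
  funext idx
  have hsum : (∑ j, M j i * ((V * P)ᵀ)⁻¹ idx j) = (X * P) idx i := by
    rw [← hinv, Matrix.mul_apply]
    exact Finset.sum_congr rfl fun j _ => mul_comm _ _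
  have hterm1 : (∑ ℓ, ((V * P)ᵀ * X) i ℓ * (Vᵀ)⁻¹ idx ℓ)
      = ((Vᵀ)⁻¹ * Xᵀ * (V * P)) idx i := by
    rw [Matrix.mul_assoc, Matrix.mul_apply]
    refine Finset.sum_congr rfl fun ℓ _ => ?_
    rw [Matrix.mul_apply, Matrix.mul_apply, mul_comm]
    congr 1
    exact Finset.sum_congr rfl fun t _ => by simp [Matrix.transpose_apply, mul_comm]
  have e3 : (univ.filter (fun j : Fin k => (j : ℕ) < r)).erase i
      = univ.filter (fun j : Fin k => (j : ℕ) < r ∧ j ≠ i) := by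
    ext j
    simp only [Finset.mem_erase, Finset.mem_filter, Finset.mem_univ, true_and]
    tauto
  have hmem : i ∈ univ.filter (fun j : Fin k => (j : ℕ) < r) := by
    simp [hi]
  have hsplit : (X * P) idx i =
      M i i * ((V * P)ᵀ)⁻¹ idx i
      + (∑ j ∈ univ.filter (fun j : Fin k => (j : ℕ) < r ∧ j ≠ i),
          M j i * ((V * P)ᵀ)⁻¹ idx j)
      + (∑ j ∈ univ.filter (fun j : Fin k => r ≤ (j : ℕ)),
          M j i * ((V * P)ᵀ)⁻¹ idx j) := by
    rw [← hsum,
      ← Finset.sum_filter_add_sum_filter_not univ (fun j : Fin k => (j : ℕ) < r)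
        (fun j => M j i * ((V * P)ᵀ)⁻¹ idx j)]
    have e2 : univ.filter (fun j : Fin k => ¬ (j : ℕ) < r)
        = univ.filter (fun j : Fin k => r ≤ (j : ℕ)) := by
      simp [not_lt]
    rw [e2, ← Finset.add_sum_erase _ _ hmem, e3]
  have hLHS : Y idx i = δ * ((Vᵀ)⁻¹ * Xᵀ * (V * P)) idx i + ε * (X * P) idx i := by
    rw [hY]
    simp [Matrix.add_apply, Matrix.smul_apply, smul_eq_mul]
  simp only [h1, h2, h3, h4, hterm1]
  have hS2 : ∀ j : Fin k, δ * M j i + ε * M i j - ε * M i j = δ * M j i :=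
    fun j => by ring
  simp only [hS2]
  rw [hLHS, hsplit]
  have hsum2 : (∑ j ∈ univ.filter (fun j : Fin k => r ≤ (j : ℕ)),
      (δ * M j i) * ((V * P)ᵀ)⁻¹ idx j)
      = δ * ∑ j ∈ univ.filter (fun j : Fin k => r ≤ (j : ℕ)),
          M j i * ((V * P)ᵀ)⁻¹ idx j := by
    rw [Finset.mul_sum]
    exact Finset.sum_congr rfl fun j _ => by ring
  rw [hsum2]
  field_simp
  ring
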